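/- Let V be a vector space of finite dimension at least 2 over a field K, with a nondegenerate bilinear form B. If there exists a vector v with B(v,v) ≠ 0, then there exist two linearly independent vectors v₁, v₂ with B(v₁,v₁) ≠ 0 and B(v₂,v₂) ≠ 0. -/

import Mathlib

open LinearMap (BilinForm)

/-- If `V` has finite dimension at least `2` and `B` is a nondegenerate bilinear form on `V`
with at least one non-isotropic vector, then there are two linearly independent
non-isotropic vectors. -/
theorem stmt_6 {K V : Type*} [Field K] [AddCommGroup V] [Module K V] [FiniteDimensional K V]
    (hdim : 2 ≤ Module.finrank K V)
    (B : BilinForm K V) (hnd : B.Nondegenerate)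
    (hex : ∃ v : V, B v v ≠ 0) :
    ∃ v₁ v₂ : V, LinearIndependent K ![v₁, v₂] ∧ B v₁ v₁ ≠ 0 ∧ B v₂ v₂ ≠ 0 := by
  obtain ⟨v, hv⟩ := hex
  have hv0 : v ≠ 0 := by rintro rfl; simp at hv
  by_cases hW : ∃ w : V, (∀ a : K, a • v ≠ w) ∧ B w w ≠ 0
  · obtain ⟨w, hw1, hw2⟩ := hW
    refine ⟨w, v, ?_, hw2, hv⟩
    rw [linearIndependent_fin2]
    exact ⟨by simpa using hv0, by simpa using hw1⟩
  push_neg at hW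
  -- hW : ∀ w, (∀ a, a • v ≠ w) → B w w = 0
  exfalso
  obtain ⟨w, hw⟩ : ∃ w : V, ∀ a : K, a • v ≠ w := by
    by_contra h
    push_neg at h
    have htop : Submodule.span K {v} = ⊤ := by
      rw [eq_top_iff]
      intro x _
      obtain ⟨a, ha⟩ := h x
      exact Submodule.mem_span_singleton.2 ⟨a, ha⟩
    have h1 : Module.finrank K V = 1 := by
      rw [← finrank_top K V, ← htop]
      exact finrank_span_singleton hv0
    omega
  set c : K := B v v with hc
  have expand : ∀ (x : V) (t : K),
      B (x + t • v) (x + t • v) = B x x + t * (B x v + B v x) + t * t * c := by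
    intro x t
    simp only [map_add, map_smul, LinearMap.add_apply, LinearMap.smul_apply, smul_eq_mul, hc]
    ring
  have key : ∀ u : V, (∀ a : K, a • v ≠ u) → ∀ t : K, t * (B u v + B v u) + t * t * c = 0 := by
    intro u hu t
    have h1 : ∀ a : K, a • v ≠ u + t • v := by
      intro a h
      exact hu (a - t) (by rw [sub_smul, h]; abel)
    have h2 := hW (u + t • v) h1
    rw [expand, hW u hu] at h2
    linear_combination h2
  -- characteristic 2
  have char2 : (1 + 1 : K) = 0 := by
    have h1 := key w hw 1
    have h2 := key w hw (-1)
    have hcc : (1 + 1) * c = 0 := by linear_combination h1 + h2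
    rcases mul_eq_zero.1 hcc with h | h
    · exact h
    · exact absurd h hv
  have neg_eq : ∀ x : K, -x = x := by
    intro x
    linear_combination (-x) * char2
  -- for every u outside the span of v, B u v + B v u = c
  have fkey : ∀ u : V, (∀ a : K, a • v ≠ u) → B u v + B v u = c := by
    intro u hu
    have h1 := key u hu 1
    have h2 := neg_eq c
    linear_combination h1 + h2
  by_cases hE : ∃ w' : V, (∀ a : K, a • v ≠ w') ∧ (∀ a : K, a • v ≠ w + w')
  · obtain ⟨w', hw', hww'⟩ := hE
    have f1 := fkey w hw
    have f2 := fkey w' hw'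
    have f3 := fkey (w + w') hww'
    simp only [map_add, LinearMap.add_apply] at f3
    apply hv
    linear_combination f3 - f1 - f2
  push_neg at hE
  -- hE : ∀ w', (∀ a, a • v ≠ w') → ∃ a, a • v = w + w'
  -- K has exactly two elements
  have hK : ∀ t : K, t = 0 ∨ t = 1 := by
    intro t
    by_cases ht : t = 0
    · exact Or.inl ht
    right
    have htw : ∀ a : K, a • v ≠ t • w := by
      intro a h
      exact hw (t⁻¹ * a) (by rw [mul_smul, h, ← mul_smul, inv_mul_cancel₀ ht, one_smul])
    obtain ⟨s, hs⟩ := hE (t • w) htw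
    have hs' : s • v = (1 + t) • w := by rw [hs, add_smul, one_smul]
    by_cases h1t : (1 + t) = 0
    · have : t = -1 := by linear_combination h1t
      rw [this, neg_eq 1]
    · exact absurd (show ((1 + t)⁻¹ * s) • v = w by
        rw [mul_smul, hs', ← mul_smul, inv_mul_cancel₀ h1t, one_smul]) (hw _)
  have hc1 : c = 1 := (hK c).resolve_left hv
  set a : K := B v w with hab
  have hwv : B w v = c - a := by
    have := fkey w hw
    linear_combination this
  set x : V := (1 + a) • v + w with hx
  have hxv : B x v = 0 := by
    rw [hx]
    simp only [map_add, map_smul, LinearMap.add_apply, LinearMap.smul_apply, smul_eq_mul]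
    rw [hwv, ← hc, hc1]
    linear_combination char2
  have hxw : B x w = 0 := by
    rw [hx]
    simp only [map_add, map_smul, LinearMap.add_apply, LinearMap.smul_apply, smul_eq_mul]
    rw [hW w hw, ← hab]
    rcases hK a with h | h
    · rw [h]; ring
    · rw [h]; linear_combination char2
  have hzero : ∀ y : V, B x y = 0 := by
    intro y
    by_cases hy : ∀ b : K, b • v ≠ y
    · obtain ⟨s, hs⟩ := hE y hy
      have hy' : y = s • v - w := by rw [hs]; abel
      rw [hy', map_sub, map_smul, smul_eq_mul, hxv, hxw]
      ring
    · push_neg at hy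
      obtain ⟨b, hb⟩ := hy
      rw [← hb, map_smul, smul_eq_mul, hxv, mul_zero]
  have hx0 := hnd.1 x hzero
  rw [hx] at hx0
  have : (-(1 + a)) • v = w := by
    rw [neg_smul, neg_eq_iff_add_eq_zero]
    linear_combination (norm := abel) hx0
  exact hw _ this
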